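/- Each kernel of the form δ_{x,y|0} + δ_{x',y'|1} with x ≠ x' (point mass on (x,y) given Z=0 and point mass on (x',y') given Z=1) satisfies the IV inequalities and is an extreme point of the polytope of Markov kernels satisfying the IV inequalities. -/

import Mathlib

/-- The polytope of Markov kernels `K(X,Y|Z)` (binary `Y`, `Z`; `X` taking
values in `Fin n`) satisfying the IV inequalities.  `K x y z` denotes
`K(X=x, Y=y | Z=z)`. -/
def IVPolytope (n : ℕ) : Set (Fin n → Bool → Bool → ℝ) :=
  {K | (∀ x y z, 0 ≤ K x y z) ∧ (∀ z, ∑ x, ∑ y, K x y z = 1) ∧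
       (∀ x, K x false false + K x true true ≤ 1 ∧
             K x false true + K x true false ≤ 1)}

/-- The kernel putting point mass on `(x,y)` given `Z = 0` (i.e. `false`)
and point mass on `(x',y')` given `Z = 1` (i.e. `true`). -/
def deltaKernel {n : ℕ} (x x' : Fin n) (y y' : Bool) : Fin n → Bool → Bool → ℝ :=
  fun a b z =>
    if z = false then (if a = x ∧ b = y then 1 else 0)
    else (if a = x' ∧ b = y' then 1 else 0)

lemma delta_mem {n : ℕ} (x x' : Fin n) (y y' : Bool) (hxx : x ≠ x') :
    deltaKernel x x' y y' ∈ IVPolytope n := by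
  refine ⟨?_, ?_, ?_⟩
  · intro a b z
    unfold deltaKernel
    split_ifs <;> norm_num
  · intro z
    unfold deltaKernel
    cases z <;> simp [ite_and, Finset.sum_ite_eq', Finset.sum_ite_eq]
  · intro a
    unfold deltaKernel
    simp only [if_pos rfl, if_neg (by simp : ¬ (true = false))]
    have hkey : ∀ (P Q : Prop) [Decidable P] [Decidable Q], ¬(P ∧ Q) →
        (if P then (1:ℝ) else 0) + (if Q then 1 else 0) ≤ 1 := by
      intro P Q _ _ h
      split_ifs with h1 h2
      · exact absurd ⟨h1, h2⟩ h
      all_goals norm_num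
    constructor
    · exact hkey _ _ (fun hc => hxx (hc.1.1.symm.trans hc.2.1))
    · exact hkey _ _ (fun hc => hxx (hc.2.1.symm.trans hc.1.1))

lemma key {n : ℕ} (x x' : Fin n) (y y' : Bool)
    (A : Fin n → Bool → Bool → ℝ) (hA : A ∈ IVPolytope n)
    (hz : ∀ p q r, deltaKernel x x' y y' p q r = 0 → A p q r = 0) :
    A = deltaKernel x x' y y' := by
  obtain ⟨hpos, hsum, _⟩ := hA
  have hmain : ∀ (z : Bool) (u : Fin n) (v : Bool),
      (∀ p q, ¬ (p = u ∧ q = v) → deltaKernel x x' y y' p q z = 0) →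
      A u v z = 1 := by
    intro z u v hother
    have h1 : ∑ p, ∑ q, A p q z = A u v z := by
      rw [Fintype.sum_eq_single u]
      · rw [Fintype.sum_eq_single v]
        intro b hb
        exact hz _ _ _ (hother u b (by tauto))
      · intro p hp
        apply Finset.sum_eq_zero
        intro q _
        exact hz _ _ _ (hother p q (by tauto))
    rw [hsum z] at h1
    exact h1.symm
  funext p q r
  by_cases h : deltaKernel x x' y y' p q r = 0
  · rw [h, hz p q r h]
  · unfold deltaKernel at h ⊢
    cases r
    · simp only [if_pos rfl] at h ⊢
      obtain ⟨rfl, rfl⟩ : p = x ∧ q = y := by by_contra hc; exact h (if_neg hc)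
      rw [if_pos (⟨rfl, rfl⟩ : p = p ∧ q = q)]
      exact hmain false p q (by
        intro a b hab
        simp only [deltaKernel, if_pos rfl]
        exact if_neg hab)
    · simp only [if_neg (by simp : ¬ (true = false))] at h ⊢
      obtain ⟨rfl, rfl⟩ : p = x' ∧ q = y' := by by_contra hc; exact h (if_neg hc)
      rw [if_pos (⟨rfl, rfl⟩ : p = p ∧ q = q)]
      exact hmain true p q (by
        intro a b hab
        simp only [deltaKernel, if_neg (by simp : ¬ (true = false))]
        exact if_neg hab)

/-- Each kernel `δ_{x,y|0} + δ_{x',y'|1}` with `x ≠ x'` satisfies the IV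
inequalities and is an extreme point of the IV polytope. -/
theorem stmt5 (n : ℕ) (hn : 2 ≤ n) (x x' : Fin n) (y y' : Bool) (hxx : x ≠ x') :
    deltaKernel x x' y y' ∈ IVPolytope n ∧
    deltaKernel x x' y y' ∈ Set.extremePoints ℝ (IVPolytope n) := by
  refine ⟨delta_mem x x' y y' hxx, delta_mem x x' y y' hxx, ?_⟩
  intro A hA B hB hseg
  obtain ⟨a, b, ha, hb, hab, hsum⟩ := hseg
  have hzero : ∀ p q r, deltaKernel x x' y y' p q r = 0 →
      A p q r = 0 ∧ B p q r = 0 := by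
    intro p q r hd
    have h0 : a * A p q r + b * B p q r = 0 := by
      have := congrFun (congrFun (congrFun hsum p) q) r
      simpa [hd] using this
    have hA0 := hA.1 p q r
    have hB0 := hB.1 p q r
    constructor <;> nlinarith
  exact key x x' y y' A hA (fun p q r hd => (hzero p q r hd).1)
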